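/- arXiv:1712.04497 — 5 statements merged into one kernel-verified Lean document; each statement's English description precedes it below -/
import Mathlib

section
/- Let h be an invertible p×p complex Hermitian matrix all of whose leading principal minors are nonzero. Then there exist a unique p×p complex lower triangular matrix s with positive real diagonal entries and a unique diagonal matrix ε = diag(ε_1,…,ε_p) with each ε_i = ±1 such that h = s ε s*. -/
open Matrix

/-- `s` is lower triangular with positive real diagonal entries. -/
def LowerPos {p : ℕ} (s : Matrix (Fin p) (Fin p) ℂ) : Prop :=
  (∀ i j : Fin p, i < j → s i j = 0) ∧ ∀ i : Fin p, 0 < (s i i).re ∧ (s i i).im = 0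

lemma entry_lemma {p : ℕ} (s : Matrix (Fin p) (Fin p) ℂ) (e : Fin p → ℂ) (i j : Fin p) :
    (s * Matrix.diagonal e * sᴴ) i j = ∑ k, s i k * e k * (starRingEnd ℂ) (s j k) := by
  rw [Matrix.mul_apply]
  refine Finset.sum_congr rfl fun k _ => ?_
  rw [Matrix.mul_diagonal, Matrix.conjTranspose_apply]
  rfl

lemma sign_conj {e : ℂ} (he : e = 1 ∨ e = -1) : (starRingEnd ℂ) e = e := by
  rcases he with h | h <;> simp [h]

lemma sq_pos_unique {t t' e e' : ℂ} (ht0 : 0 < t.re) (ht1 : t.im = 0)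
    (ht0' : 0 < t'.re) (ht1' : t'.im = 0)
    (he : e = 1 ∨ e = -1) (he' : e' = 1 ∨ e' = -1)
    (heq : t * e * (starRingEnd ℂ) t = t' * e' * (starRingEnd ℂ) t') : t = t' ∧ e = e' := by
  have ct : (starRingEnd ℂ) t = t := Complex.conj_eq_iff_im.2 ht1
  have ct' : (starRingEnd ℂ) t' = t' := Complex.conj_eq_iff_im.2 ht1'
  rw [ct, ct'] at heq
  have hre : ∀ a b : ℂ, a.im = 0 → b.im = 0 → (a * b).re = a.re * b.re := by
    intro a b ha hb; simp [Complex.mul_re, ha, hb]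
  rcases he with rfl | rfl <;> rcases he' with rfl | rfl
  · have : t * t = t' * t' := by linear_combination heq
    have h2 : t.re * t.re = t'.re * t'.re := by
      rw [← hre t t ht1 ht1, ← hre t' t' ht1' ht1', this]
    have : t.re = t'.re := by nlinarith
    exact ⟨Complex.ext this (ht1.trans ht1'.symm), rfl⟩
  · exfalso
    have : t * t = -(t' * t') := by linear_combination heq
    have h2 : t.re * t.re = -(t'.re * t'.re) := by
      rw [← hre t t ht1 ht1, ← hre t' t' ht1' ht1', this, Complex.neg_re]
    nlinarith
  · exfalso
    have : -(t * t) = t' * t' := by linear_combination heq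
    have h2 : -(t.re * t.re) = t'.re * t'.re := by
      rw [← hre t t ht1 ht1, ← hre t' t' ht1' ht1', ← Complex.neg_re, this]
    nlinarith
  · have : t * t = t' * t' := by linear_combination -heq
    have h2 : t.re * t.re = t'.re * t'.re := by
      rw [← hre t t ht1 ht1, ← hre t' t' ht1' ht1', this]
    have : t.re = t'.re := by nlinarith
    exact ⟨Complex.ext this (ht1.trans ht1'.symm), rfl⟩

lemma cholesky_aux (p : ℕ) : ∀ (h : Matrix (Fin p) (Fin p) ℂ), hᴴ = h →
    (∀ (k : ℕ) (hk : k ≤ p), (h.submatrix (Fin.castLE hk) (Fin.castLE hk)).det ≠ 0) →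
    ∃! sε : Matrix (Fin p) (Fin p) ℂ × (Fin p → ℂ),
      LowerPos sε.1 ∧ (∀ i, sε.2 i = 1 ∨ sε.2 i = -1) ∧
      h = sε.1 * Matrix.diagonal sε.2 * sε.1ᴴ := by
  induction p with
  | zero =>
    intro h _ _
    refine ⟨(1, fun _ => 1), ⟨⟨fun i => i.elim0, fun i => i.elim0⟩, fun i => i.elim0, ?_⟩, ?_⟩
    · funext i; exact i.elim0
    · rintro ⟨s, e⟩ _
      refine Prod.ext ?_ ?_
      · funext i; exact i.elim0
      · funext i; exact i.elim0
  | succ p ih =>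
    intro h hherm hminors
    set h₀ : Matrix (Fin p) (Fin p) ℂ := h.submatrix Fin.castSucc Fin.castSucc with hh₀
    have hherm₀ : h₀ᴴ = h₀ := by
      funext i j
      have := congrFun (congrFun hherm i.castSucc) j.castSucc
      simpa [Matrix.conjTranspose_apply, hh₀] using this
    have hcast : ∀ (k : ℕ) (hk : k ≤ p) (x : Fin k),
        Fin.castSucc (Fin.castLE hk x) = Fin.castLE (hk.trans p.le_succ) x := by
      intro k hk x; ext; rfl
    have hminors₀ : ∀ (k : ℕ) (hk : k ≤ p),
        (h₀.submatrix (Fin.castLE hk) (Fin.castLE hk)).det ≠ 0 := by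
      intro k hk
      have : h₀.submatrix (Fin.castLE hk) (Fin.castLE hk)
          = h.submatrix (Fin.castLE (hk.trans p.le_succ)) (Fin.castLE (hk.trans p.le_succ)) := by
        funext i j
        simp [hh₀, Matrix.submatrix_apply, hcast k hk]
      rw [this]
      exact hminors k (hk.trans p.le_succ)
    obtain ⟨⟨s₀, ε₀⟩, ⟨⟨hs₀low, hs₀diag⟩, hε₀, hfac₀⟩, huniq₀⟩ := ih h₀ hherm₀ hminors₀
    replace hs₀low : ∀ i j : Fin p, i < j → s₀ i j = 0 := hs₀low
    replace hs₀diag : ∀ i : Fin p, 0 < (s₀ i i).re ∧ (s₀ i i).im = 0 := hs₀diag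
    replace hε₀ : ∀ i : Fin p, ε₀ i = 1 ∨ ε₀ i = -1 := hε₀
    replace hfac₀ : h₀ = s₀ * Matrix.diagonal ε₀ * s₀ᴴ := hfac₀
    have hdet_h : h.det ≠ 0 := by
      have := hminors (p + 1) le_rfl
      have he : h.submatrix (Fin.castLE (le_refl (p+1))) (Fin.castLE (le_refl (p+1))) = h := by
        funext i j; rfl
      rwa [he] at this
    have hdet_h₀ : h₀.det ≠ 0 := by
      have := hminors p p.le_succ
      have he : h.submatrix (Fin.castLE p.le_succ) (Fin.castLE p.le_succ) = h₀ := by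
        funext i j; rfl
      rwa [he] at this
    have hε₀ne : ∀ k, ε₀ k ≠ 0 := by
      intro k; rcases hε₀ k with h1 | h1 <;> simp [h1]
    have hε₀conj : ∀ k, (starRingEnd ℂ) (ε₀ k) = ε₀ k := by
      intro k; rcases hε₀ k with h1 | h1 <;> simp [h1]
    have hdet_m : IsUnit (s₀ * Matrix.diagonal ε₀).det := by
      rw [det_mul, det_diagonal]
      refine (IsUnit.mul_iff.2 ⟨?_, ?_⟩)
      · rw [isUnit_iff_ne_zero]
        intro h0
        apply hdet_h₀
        rw [hfac₀, det_mul, det_mul, h0]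
        ring
      · rw [isUnit_iff_ne_zero]
        exact Finset.prod_ne_zero_iff.2 fun k _ => hε₀ne k
    set u : Fin p → ℂ :=
      (s₀ * Matrix.diagonal ε₀)⁻¹ *ᵥ (fun i => h i.castSucc (Fin.last p)) with hudef
    set w : Fin p → ℂ := fun k => (starRingEnd ℂ) (u k) with hwdef
    have hwconj : ∀ k, (starRingEnd ℂ) (w k) = u k := fun k => Complex.conj_conj _
    have hmu : (s₀ * Matrix.diagonal ε₀) *ᵥ u = fun i => h i.castSucc (Fin.last p) := by
      rw [hudef, Matrix.mulVec_mulVec, Matrix.mul_nonsing_inv _ hdet_m, Matrix.one_mulVec]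
    have hb : ∀ i, (∑ k, s₀ i k * ε₀ k * (starRingEnd ℂ) (w k))
        = h i.castSucc (Fin.last p) := by
      intro i
      have h1 : (∑ k, (s₀ * Matrix.diagonal ε₀) i k * u k) = h i.castSucc (Fin.last p) :=
        congrFun hmu i
      rw [← h1]
      refine Finset.sum_congr rfl fun k _ => ?_
      rw [Matrix.mul_diagonal, hwconj]
    set r : ℂ := h (Fin.last p) (Fin.last p)
      - ∑ k, w k * ε₀ k * (starRingEnd ℂ) (w k) with hrdef
    -- the candidate matrix with last-row tail `w`, corner `t`
    have key : ∀ t el : ℂ, t * el * (starRingEnd ℂ) t = r →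
        h = (Matrix.of (Fin.snoc (fun i' => Fin.snoc (s₀ i') (0:ℂ)) (Fin.snoc w t)))
          * Matrix.diagonal (Fin.snoc ε₀ el)
          * (Matrix.of (Fin.snoc (fun i' => Fin.snoc (s₀ i') (0:ℂ)) (Fin.snoc w t)))ᴴ := by
      intro t el htel
      funext i j
      rw [entry_lemma, Fin.sum_univ_castSucc]
      induction i using Fin.lastCases with
      | last =>
        induction j using Fin.lastCases with
        | last =>
          simp only [Matrix.of_apply, Fin.snoc_last, Fin.snoc_castSucc]
          rw [htel, hrdef]
          ring
        | cast j' =>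
          simp only [Matrix.of_apply, Fin.snoc_last, Fin.snoc_castSucc, map_zero,
            mul_zero, add_zero]
          have hsym : h (Fin.last p) j'.castSucc
              = (starRingEnd ℂ) (h j'.castSucc (Fin.last p)) := by
            conv_lhs => rw [← hherm]
            rfl
          rw [hsym, ← hb j', map_sum]
          refine Finset.sum_congr rfl fun k _ => ?_
          rw [_root_.map_mul, _root_.map_mul, hε₀conj, Complex.conj_conj]
          ring
      | cast i' =>
        induction j using Fin.lastCases with
        | last =>
          simp only [Matrix.of_apply, Fin.snoc_last, Fin.snoc_castSucc, zero_mul, add_zero]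
          exact (hb i').symm
        | cast j' =>
          simp only [Matrix.of_apply, Fin.snoc_last, Fin.snoc_castSucc, map_zero,
            mul_zero, add_zero, zero_mul]
          have := congrFun (congrFun hfac₀ i') j'
          rw [entry_lemma] at this
          exact this
    have hrne : r ≠ 0 := by
      have h1 : (1:ℂ) * r * (starRingEnd ℂ) 1 = r := by simp
      have hk := key 1 r h1
      intro hr0
      apply hdet_h
      rw [hk, det_mul, det_mul, det_diagonal, Fin.prod_univ_castSucc]
      simp [hr0]
    have hrconj : (starRingEnd ℂ) r = r := by
      have hc : (starRingEnd ℂ) (h (Fin.last p) (Fin.last p)) = h (Fin.last p) (Fin.last p) := by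
        have := congrFun (congrFun hherm (Fin.last p)) (Fin.last p)
        simpa [Matrix.conjTranspose_apply] using this
      rw [hrdef, map_sub, hc, map_sum]
      congr 1
      refine Finset.sum_congr rfl fun k _ => ?_
      rw [_root_.map_mul, _root_.map_mul, hε₀conj, Complex.conj_conj]
      ring
    have hrim : r.im = 0 := Complex.conj_eq_iff_im.1 hrconj
    have hrre : r.re ≠ 0 := by
      intro h0; exact hrne (Complex.ext h0 hrim)
    set el : ℂ := if 0 < r.re then 1 else -1 with heldef
    set t : ℂ := ((Real.sqrt |r.re| : ℝ) : ℂ) with htdef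
    have htre : 0 < t.re := by
      rw [htdef, Complex.ofReal_re]
      exact Real.sqrt_pos.2 (abs_pos.2 hrre)
    have htim : t.im = 0 := by rw [htdef, Complex.ofReal_im]
    have hel : el = 1 ∨ el = -1 := by
      rw [heldef]; split <;> simp
    have htel : t * el * (starRingEnd ℂ) t = r := by
      rw [htdef, Complex.conj_ofReal]
      have hsq : ((Real.sqrt |r.re| : ℝ) : ℂ) * ((Real.sqrt |r.re| : ℝ) : ℂ)
          = ((|r.re| : ℝ) : ℂ) := by
        rw [← Complex.ofReal_mul, Real.mul_self_sqrt (abs_nonneg _)]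
      have : ((Real.sqrt |r.re| : ℝ) : ℂ) * el * ((Real.sqrt |r.re| : ℝ) : ℂ)
          = el * ((|r.re| : ℝ) : ℂ) := by
        rw [← hsq]; ring
      rw [this, heldef]
      split
      · next hpos =>
        rw [one_mul]
        refine Complex.ext ?_ ?_ <;> simp [abs_of_pos hpos, hrim]
      · next hneg =>
        have hlt : r.re < 0 := lt_of_le_of_ne (not_lt.1 hneg) hrre
        refine Complex.ext ?_ ?_ <;> simp [abs_of_neg hlt, hrim]
    set S : Matrix (Fin (p+1)) (Fin (p+1)) ℂ :=
      Matrix.of (Fin.snoc (fun i' => Fin.snoc (s₀ i') (0:ℂ)) (Fin.snoc w t)) with hSdef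
    refine ⟨(S, Fin.snoc ε₀ el), ⟨⟨?_, ?_⟩, ?_, key t el htel⟩, ?_⟩
    · -- lower triangular
      intro i j hij
      induction j using Fin.lastCases with
      | last =>
        induction i using Fin.lastCases with
        | last => exact absurd hij (lt_irrefl _)
        | cast i' => simp [hSdef, Fin.snoc_castSucc, Fin.snoc_last]
      | cast j' =>
        induction i using Fin.lastCases with
        | last => exact absurd hij (not_lt.2 (Fin.castSucc_lt_last j').le)
        | cast i' =>
          have : i' < j' := by
            rwa [Fin.castSucc_lt_castSucc_iff] at hij
          simp [hSdef, Fin.snoc_castSucc, hs₀low i' j' this]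
    · -- positive diagonal
      intro i
      induction i using Fin.lastCases with
      | last =>
        show 0 < (S (Fin.last p) (Fin.last p)).re ∧ (S (Fin.last p) (Fin.last p)).im = 0
        have hS : S (Fin.last p) (Fin.last p) = t := by simp [hSdef]
        rw [hS]; exact ⟨htre, htim⟩
      | cast i' =>
        show 0 < (S i'.castSucc i'.castSucc).re ∧ (S i'.castSucc i'.castSucc).im = 0
        have hS : S i'.castSucc i'.castSucc = s₀ i' i' := by simp [hSdef]
        rw [hS]; exact hs₀diag i'
    · -- signs
      intro i
      induction i using Fin.lastCases with
      | last => simpa [Fin.snoc_last] using hel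
      | cast i' => simpa [Fin.snoc_castSucc] using hε₀ i'
    · -- uniqueness
      rintro ⟨s', ε'⟩ ⟨⟨hlow', hdiag'⟩, hsign', hfac'⟩
      replace hlow' : ∀ i j : Fin (p+1), i < j → s' i j = 0 := hlow'
      replace hdiag' : ∀ i : Fin (p+1), 0 < (s' i i).re ∧ (s' i i).im = 0 := hdiag'
      replace hsign' : ∀ i : Fin (p+1), ε' i = 1 ∨ ε' i = -1 := hsign'
      replace hfac' : h = s' * Matrix.diagonal ε' * s'ᴴ := hfac'
      have hzero' : ∀ i : Fin p, s' i.castSucc (Fin.last p) = 0 :=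
        fun i => hlow' _ _ (Fin.castSucc_lt_last i)
      have E : ∀ i j : Fin (p+1), h i j
          = (∑ k : Fin p, s' i k.castSucc * ε' k.castSucc * (starRingEnd ℂ) (s' j k.castSucc))
            + s' i (Fin.last p) * ε' (Fin.last p) * (starRingEnd ℂ) (s' j (Fin.last p)) := by
        intro i j
        have := congrFun (congrFun hfac' i) j
        rw [entry_lemma, Fin.sum_univ_castSucc] at this
        exact this
      set s₀' : Matrix (Fin p) (Fin p) ℂ := s'.submatrix Fin.castSucc Fin.castSucc with hs₀'def
      set ε₀' : Fin p → ℂ := fun k => ε' k.castSucc with hε₀'def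
      have hfac₀' : h₀ = s₀' * Matrix.diagonal ε₀' * s₀'ᴴ := by
        funext i j
        rw [entry_lemma]
        have := E i.castSucc j.castSucc
        rw [hzero' i, zero_mul, zero_mul, add_zero] at this
        exact this
      have huq := huniq₀ (s₀', ε₀')
        ⟨⟨fun i j hij => hlow' _ _ (by rwa [Fin.castSucc_lt_castSucc_iff]),
          fun i => hdiag' i.castSucc⟩, fun i => hsign' i.castSucc, hfac₀'⟩
      have hs0eq : s₀' = s₀ := congrArg Prod.fst huq
      have he0eq : ε₀' = ε₀ := congrArg Prod.snd huq
      set w' : Fin p → ℂ := fun k => s' (Fin.last p) k.castSucc with hw'def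
      have hweq : w' = w := by
        have hmu' : (s₀ * Matrix.diagonal ε₀) *ᵥ (fun k => (starRingEnd ℂ) (w' k))
            = fun i => h i.castSucc (Fin.last p) := by
          funext i
          show (∑ k, (s₀ * Matrix.diagonal ε₀) i k * (starRingEnd ℂ) (w' k))
            = h i.castSucc (Fin.last p)
          have hE := E i.castSucc (Fin.last p)
          rw [hzero' i, zero_mul, zero_mul, add_zero] at hE
          rw [hE]
          refine Finset.sum_congr rfl fun k _ => ?_
          rw [Matrix.mul_diagonal]
          have h1 : s₀ i k = s₀' i k := by rw [hs0eq]
          have h2 : ε₀ k = ε₀' k := by rw [he0eq]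
          rw [h1, h2]
          rfl
        have hcan : (fun k => (starRingEnd ℂ) (w' k)) = u := by
          have h3 := congrArg (fun v => (s₀ * Matrix.diagonal ε₀)⁻¹ *ᵥ v) hmu'
          simp only [Matrix.mulVec_mulVec, Matrix.nonsing_inv_mul _ hdet_m,
            Matrix.one_mulVec] at h3
          rw [hudef]
          exact h3
        funext k
        have h4 : (starRingEnd ℂ) (w' k) = u k := congrFun hcan k
        have h5 : w' k = (starRingEnd ℂ) (u k) := by rw [← h4, Complex.conj_conj]
        exact h5
      have hcorner : s' (Fin.last p) (Fin.last p) * ε' (Fin.last p)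
          * (starRingEnd ℂ) (s' (Fin.last p) (Fin.last p)) = r := by
        have hE := E (Fin.last p) (Fin.last p)
        rw [hrdef, hE]
        have hsum : (∑ k : Fin p, s' (Fin.last p) k.castSucc * ε' k.castSucc
            * (starRingEnd ℂ) (s' (Fin.last p) k.castSucc))
            = ∑ k, w k * ε₀ k * (starRingEnd ℂ) (w k) := by
          refine Finset.sum_congr rfl fun k _ => ?_
          have h1 : s' (Fin.last p) k.castSucc = w k := by
            rw [← hweq]
          have h2 : ε' k.castSucc = ε₀ k := by
            rw [← he0eq]
          rw [h1, h2]
        rw [hsum]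
        ring
      obtain ⟨hteq, heleq⟩ := sq_pos_unique (hdiag' (Fin.last p)).1 (hdiag' (Fin.last p)).2
        htre htim (hsign' (Fin.last p)) hel (hcorner.trans htel.symm)
      have hsS : s' = S := by
        funext i j
        induction i using Fin.lastCases with
        | last =>
          induction j using Fin.lastCases with
          | last => simpa [hSdef, Fin.snoc_last] using hteq
          | cast j' =>
            have hx : s' (Fin.last p) j'.castSucc = w j' := by rw [← hweq]
            simpa [hSdef, Fin.snoc_last, Fin.snoc_castSucc] using hx
        | cast i' =>
          induction j using Fin.lastCases with
          | last =>
            simpa [hSdef, Fin.snoc_castSucc, Fin.snoc_last] using hzero' i'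
          | cast j' =>
            have hx : s' i'.castSucc j'.castSucc = s₀ i' j' := by rw [← hs0eq]; rfl
            simpa [hSdef, Fin.snoc_castSucc] using hx
      have heE : ε' = Fin.snoc ε₀ el := by
        funext k
        induction k using Fin.lastCases with
        | last => simpa [Fin.snoc_last] using heleq
        | cast k' =>
          have hx : ε' k'.castSucc = ε₀ k' := by rw [← he0eq]
          simpa [Fin.snoc_castSucc] using hx
      rw [hsS, heE]

/-- An invertible Hermitian matrix whose leading principal minors are all nonzero
factors uniquely as `h = s ε sᴴ` with `s` lower triangular with positive real diagonal
and `ε` a diagonal matrix of signs `±1`. -/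
theorem hermitian_cholesky_signature (p : ℕ) (h : Matrix (Fin p) (Fin p) ℂ)
    (hherm : hᴴ = h) (hinv : IsUnit h.det)
    (hminors : ∀ (k : ℕ) (hk : k ≤ p),
      (h.submatrix (Fin.castLE hk) (Fin.castLE hk)).det ≠ 0) :
    ∃! sε : Matrix (Fin p) (Fin p) ℂ × (Fin p → ℂ),
      LowerPos sε.1 ∧ (∀ i, sε.2 i = 1 ∨ sε.2 i = -1) ∧
      h = sε.1 * Matrix.diagonal sε.2 * sε.1ᴴ := by
  exact cholesky_aux p h hherm hminors
end

section
/- For every (n⁰,z⁰) in the Heisenberg group N, the operator T^ε(n⁰,z⁰) of the Gaussian realization is an isometry of L²(ℂ^{p×m}, γ): for every f ∈ L²(γ), the function T^ε(n⁰,z⁰)f lies in L²(γ) and has the same L²(γ)-norm as f. -/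
open MeasureTheory

/-- The standard Gaussian probability measure on `ℂ^{p×m}` with density
`π^{-pm} exp(-tr(zz*))` with respect to Lebesgue measure. -/
noncomputable def gaussianPM (p m : ℕ) : Measure (Fin p → Fin m → ℂ) :=
  volume.withDensity fun z =>
    ENNReal.ofReal ((Real.pi ^ (p * m))⁻¹ *
      Real.exp (-∑ i, ∑ j, Complex.normSq (z i j)))

/-- The operator `T^ε(n⁰,z⁰)` of the Gaussian realization:
`(T^ε(n⁰,z⁰)f)(z) = exp(tr(εn⁰) - (1/2)tr(z⁰z⁰*) - Σ_{i:ε_i=1} z_i z⁰_i* -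
Σ_{i:ε_i=-1} z⁰_i z_i*) · f(z + z⁰)`. -/
noncomputable def TepsG {p m : ℕ} (ε : Fin p → ℂ) (n0 : Fin p → Fin p → ℂ)
    (z0 : Fin p → Fin m → ℂ) (f : (Fin p → Fin m → ℂ) → ℂ) :
    (Fin p → Fin m → ℂ) → ℂ :=
  fun z =>
    Complex.exp ((∑ i, ε i * n0 i i)
        - (1/2 : ℂ) * ∑ i, ∑ j, z0 i j * (starRingEnd ℂ) (z0 i j)
        - ∑ i, if ε i = 1 then ∑ j, z i j * (starRingEnd ℂ) (z0 i j)
               else ∑ j, z0 i j * (starRingEnd ℂ) (z i j))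
      * f (z + z0)

namespace TepsGAux

variable {p m : ℕ}

/-- `S z = tr(zz*)`. -/
noncomputable def S (z : Fin p → Fin m → ℂ) : ℝ := ∑ i, ∑ j, Complex.normSq (z i j)

/-- The exponent appearing in `TepsG`. -/
noncomputable def A (ε : Fin p → ℂ) (n0 : Fin p → Fin p → ℂ)
    (z0 z : Fin p → Fin m → ℂ) : ℂ :=
  (∑ i, ε i * n0 i i)
    - (1/2 : ℂ) * ∑ i, ∑ j, z0 i j * (starRingEnd ℂ) (z0 i j)
    - ∑ i, if ε i = 1 then ∑ j, z i j * (starRingEnd ℂ) (z0 i j)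
           else ∑ j, z0 i j * (starRingEnd ℂ) (z i j)

lemma re_A (ε : Fin p → ℂ) (hε : ∀ i, ε i = 1 ∨ ε i = -1)
    (n0 : Fin p → Fin p → ℂ) (hn0 : ∀ i j, (starRingEnd ℂ) (n0 j i) = -n0 i j)
    (z0 z : Fin p → Fin m → ℂ) :
    (A ε n0 z0 z).re
      = -(1/2) * S z0 - ∑ i, ∑ j, (z i j * (starRingEnd ℂ) (z0 i j)).re := by
  have h0 : (∑ i, ε i * n0 i i).re = 0 := by
    rw [Complex.re_sum]
    refine Finset.sum_eq_zero fun i _ => ?_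
    have hre : (n0 i i).re = 0 := by
      have h := congrArg Complex.re (hn0 i i)
      simp only [Complex.conj_re, Complex.neg_re] at h
      linarith
    rcases hε i with h | h <;> simp [h, hre]
  have h2 : ((1/2 : ℂ) * ∑ i, ∑ j, z0 i j * (starRingEnd ℂ) (z0 i j)).re
      = (1/2) * S z0 := by
    have hsum : (∑ i, ∑ j, z0 i j * (starRingEnd ℂ) (z0 i j)) = ((S z0 : ℝ) : ℂ) := by
      simp only [Complex.mul_conj, S]
      push_cast
      rfl
    rw [hsum]
    simp
  have h3 : (∑ i, if ε i = 1 then ∑ j, z i j * (starRingEnd ℂ) (z0 i j)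
      else ∑ j, z0 i j * (starRingEnd ℂ) (z i j)).re
      = ∑ i, ∑ j, (z i j * (starRingEnd ℂ) (z0 i j)).re := by
    rw [Complex.re_sum]
    refine Finset.sum_congr rfl fun i _ => ?_
    split_ifs
    · rw [Complex.re_sum]
    · rw [Complex.re_sum]
      refine Finset.sum_congr rfl fun j _ => ?_
      simp only [Complex.mul_re, Complex.conj_re, Complex.conj_im]
      ring
  unfold A
  rw [Complex.sub_re, Complex.sub_re, h0, h2, h3]
  ring

lemma S_add (z z0 : Fin p → Fin m → ℂ) :
    S (z + z0) = S z + S z0 + 2 * ∑ i, ∑ j, (z i j * (starRingEnd ℂ) (z0 i j)).re := by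
  unfold S
  simp only [Pi.add_apply, Complex.normSq_add, Finset.sum_add_distrib, Finset.mul_sum]

lemma two_re_A (ε : Fin p → ℂ) (hε : ∀ i, ε i = 1 ∨ ε i = -1)
    (n0 : Fin p → Fin p → ℂ) (hn0 : ∀ i j, (starRingEnd ℂ) (n0 j i) = -n0 i j)
    (z0 z : Fin p → Fin m → ℂ) :
    2 * (A ε n0 z0 z).re = S z - S (z + z0) := by
  rw [re_A ε hε n0 hn0 z0 z, S_add z z0]
  ring

lemma continuous_S : Continuous (S : (Fin p → Fin m → ℂ) → ℝ) := by
  unfold S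
  refine continuous_finset_sum _ fun i _ => continuous_finset_sum _ fun j _ => ?_
  exact Complex.continuous_normSq.comp ((continuous_apply j).comp (continuous_apply i))

lemma continuous_A (ε : Fin p → ℂ) (n0 : Fin p → Fin p → ℂ) (z0 : Fin p → Fin m → ℂ) :
    Continuous fun z => A ε n0 z0 z := by
  unfold A
  refine Continuous.sub continuous_const (continuous_finset_sum _ fun i _ => ?_)
  split_ifs
  · refine continuous_finset_sum _ fun j _ => ?_
    exact (((continuous_apply j).comp (continuous_apply i) : Continuous fun z : Fin p → Fin m → ℂ => z i j).mul continuous_const)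
  · refine continuous_finset_sum _ fun j _ => ?_
    exact continuous_const.mul
      (Complex.continuous_conj.comp ((continuous_apply j).comp (continuous_apply i)))

/-- The density of the Gaussian measure. -/
noncomputable def w (p m : ℕ) (z : Fin p → Fin m → ℂ) : ENNReal :=
  ENNReal.ofReal ((Real.pi ^ (p * m))⁻¹ * Real.exp (-S z))

lemma gaussianPM_eq (p m : ℕ) : gaussianPM p m = volume.withDensity (w p m) := rfl

lemma w_pos (z : Fin p → Fin m → ℂ) : 0 < w p m z := by
  refine ENNReal.ofReal_pos.mpr ?_
  have : 0 < Real.pi := Real.pi_pos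
  positivity

lemma measurable_w : Measurable (w p m) :=
  (continuous_const.mul ((Real.continuous_exp.comp continuous_S.neg))).measurable.ennreal_ofReal

/-- Key pointwise identity. -/
lemma key_pt (ε : Fin p → ℂ) (hε : ∀ i, ε i = 1 ∨ ε i = -1)
    (n0 : Fin p → Fin p → ℂ) (hn0 : ∀ i j, (starRingEnd ℂ) (n0 j i) = -n0 i j)
    (z0 : Fin p → Fin m → ℂ) (f : (Fin p → Fin m → ℂ) → ℂ) (z : Fin p → Fin m → ℂ) :
    w p m z * (‖TepsG ε n0 z0 f z‖₊ : ENNReal) ^ (2 : ℝ)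
      = w p m (z + z0) * (‖f (z + z0)‖₊ : ENNReal) ^ (2 : ℝ) := by
  have hnorm : ‖TepsG ε n0 z0 f z‖
      = Real.exp ((A ε n0 z0 z).re) * ‖f (z + z0)‖ := by
    show ‖Complex.exp (A ε n0 z0 z) * f (z + z0)‖ = _
    rw [norm_mul, Complex.norm_exp]
  have hconv : ∀ (x : ℂ), (‖x‖₊ : ENNReal) ^ (2 : ℝ) = ENNReal.ofReal (‖x‖ ^ (2 : ℕ)) := by
    intro x
    rw [← enorm_eq_nnnorm, ← ofReal_norm,
      ENNReal.ofReal_rpow_of_nonneg (norm_nonneg _) (by norm_num : (0:ℝ) ≤ 2)]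
    congr 1
    rw [← Real.rpow_natCast]
    norm_num
  rw [hconv, hconv]
  unfold w
  rw [← ENNReal.ofReal_mul (by positivity), ← ENNReal.ofReal_mul (by positivity)]
  congr 1
  rw [hnorm]
  have hkey : 2 * (A ε n0 z0 z).re = S z - S (z + z0) := two_re_A ε hε n0 hn0 z0 z
  have hr : Real.exp (-S z) * (Real.exp ((A ε n0 z0 z).re)) ^ (2 : ℕ)
      = Real.exp (-S (z + z0)) := by
    rw [sq, ← Real.exp_add, ← Real.exp_add]
    congr 1
    linarith
  rw [mul_pow, ← hr]
  ring

end TepsGAux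

open TepsGAux in
/-- Each operator `T^ε(n⁰,z⁰)` of the Gaussian realization is an isometry of
`L²(ℂ^{p×m}, γ)`. -/
theorem TepsG_isometry (p q : ℕ) (hp : 1 ≤ p) (hpq : p ≤ q)
    (ε : Fin p → ℂ) (hε : ∀ i, ε i = 1 ∨ ε i = -1)
    (n0 : Fin p → Fin p → ℂ) (hn0 : ∀ i j, (starRingEnd ℂ) (n0 j i) = -n0 i j)
    (z0 : Fin p → Fin (q - p) → ℂ)
    (f : (Fin p → Fin (q - p) → ℂ) → ℂ)
    (hf : MemLp f 2 (gaussianPM p (q - p))) :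
    MemLp (TepsG ε n0 z0 f) 2 (gaussianPM p (q - p)) ∧
    eLpNorm (TepsG ε n0 z0 f) 2 (gaussianPM p (q - p)) =
      eLpNorm f 2 (gaussianPM p (q - p)) := by
  have hwm : Measurable (w p (q - p)) := measurable_w
  have hac1 : gaussianPM p (q - p) ≪ (volume : Measure (Fin p → Fin (q - p) → ℂ)) := by
    rw [gaussianPM_eq]; exact withDensity_absolutelyContinuous _ _
  have hac2 : (volume : Measure (Fin p → Fin (q - p) → ℂ)) ≪ gaussianPM p (q - p) := by
    rw [gaussianPM_eq]
    exact withDensity_absolutelyContinuous' hwm.aemeasurable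
      (ae_of_all _ fun z => (w_pos z).ne')
  -- a.e. strong measurability of the translated function
  have hfv : AEStronglyMeasurable f (volume : Measure (Fin p → Fin (q - p) → ℂ)) :=
    hf.1.mono_ac hac2
  have hτ : MeasurePreserving (· + z0) (volume : Measure (Fin p → Fin (q - p) → ℂ)) volume :=
    measurePreserving_add_right _ z0
  have hcomp : AEStronglyMeasurable (fun z => f (z + z0))
      (volume : Measure (Fin p → Fin (q - p) → ℂ)) :=
    hfv.comp_quasiMeasurePreserving hτ.quasiMeasurePreserving
  have hTm : AEStronglyMeasurable (TepsG ε n0 z0 f) (gaussianPM p (q - p)) := by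
    have hexp : Continuous fun z : Fin p → Fin (q - p) → ℂ => Complex.exp (A ε n0 z0 z) :=
      Complex.continuous_exp.comp (continuous_A ε n0 z0)
    exact ((hexp.aestronglyMeasurable.mul hcomp).mono_ac hac1)
  -- the lintegral identity
  have hlin : ∫⁻ z, (‖TepsG ε n0 z0 f z‖₊ : ENNReal) ^ (2 : ℝ) ∂gaussianPM p (q - p)
      = ∫⁻ z, (‖f z‖₊ : ENNReal) ^ (2 : ℝ) ∂gaussianPM p (q - p) := by
    rw [gaussianPM_eq,
      lintegral_withDensity_eq_lintegral_mul_non_measurable₀ _ hwm.aemeasurable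
        (ae_of_all _ fun z => ENNReal.ofReal_lt_top),
      lintegral_withDensity_eq_lintegral_mul_non_measurable₀ _ hwm.aemeasurable
        (ae_of_all _ fun z => ENNReal.ofReal_lt_top)]
    have : ∀ z, (w p (q - p) * fun z => (‖TepsG ε n0 z0 f z‖₊ : ENNReal) ^ (2 : ℝ)) z
        = (fun z => w p (q - p) z * (‖f z‖₊ : ENNReal) ^ (2 : ℝ)) (z + z0) := by
      intro z
      exact key_pt ε hε n0 hn0 z0 f z
    rw [lintegral_congr this, lintegral_add_right_eq_self
      (fun z => w p (q - p) z * (‖f z‖₊ : ENNReal) ^ (2 : ℝ)) z0]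
    rfl
  -- conclude
  have heq : eLpNorm (TepsG ε n0 z0 f) 2 (gaussianPM p (q - p)) = eLpNorm f 2 (gaussianPM p (q - p)) := by
    rw [eLpNorm_eq_lintegral_rpow_enorm_toReal (by norm_num) (by norm_num),
      eLpNorm_eq_lintegral_rpow_enorm_toReal (by norm_num) (by norm_num)]
    simp only [ENNReal.toReal_ofNat, enorm_eq_nnnorm]
    rw [hlin]
  exact ⟨⟨hTm, heq ▸ hf.2⟩, heq⟩
end

section
/- If f : ℂ^m → ℂ is holomorphic (entire) and integrable with respect to the standard Gaussian measure γ on ℂ^m, then ∫_{ℂ^m} f dγ = f(0). -/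
open MeasureTheory

open Set Real

theorem integrableOn_comp_polarCoord_symm' {E : Type*} [NormedAddCommGroup E] [NormedSpace ℝ E]
    (f : ℝ × ℝ → E) (hf : Integrable f volume) :
    IntegrableOn (fun p => p.1 • f (polarCoord.symm p)) polarCoord.target := by
  set B : ℝ × ℝ → ℝ × ℝ →L[ℝ] ℝ × ℝ := fun p =>
    LinearMap.toContinuousLinearMap (Matrix.toLin (Module.Basis.finTwoProd ℝ) (Module.Basis.finTwoProd ℝ)
      !![Real.cos p.2, -p.1 * Real.sin p.2; Real.sin p.2, p.1 * Real.cos p.2]) with hB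
  have A : ∀ p ∈ polarCoord.target, HasFDerivWithinAt polarCoord.symm (B p) polarCoord.target p :=
    fun p _ => (hasFDerivAt_polarCoord_symm p).hasFDerivWithinAt
  have B_det : ∀ p ∈ polarCoord.target, |(B p).det| = p.1 := by
    intro p hp
    have h1 : (B p).det = p.1 := by
      conv_rhs => rw [← one_mul p.1, ← cos_sq_add_sin_sq p.2]
      simp only [hB, neg_mul, LinearMap.det_toContinuousLinearMap, LinearMap.det_toLin,
        Matrix.det_fin_two_of, sub_neg_eq_add]
      ring
    rw [h1, abs_of_pos hp.1]
  have inj : Set.InjOn polarCoord.symm polarCoord.target := by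
    have := polarCoord.symm.injOn
    rwa [OpenPartialHomeomorph.symm_source] at this
  have h := (integrableOn_image_iff_integrableOn_abs_det_fderiv_smul volume
    polarCoord.open_target.measurableSet A inj f).mp ?_
  · refine h.congr_fun (fun p hp => ?_) polarCoord.open_target.measurableSet
    beta_reduce
    rw [B_det p hp]
  · rw [polarCoord.symm_image_target_eq_source]
    exact hf.integrableOn

theorem Complex.integrableOn_comp_polarCoord_symm' {E : Type*} [NormedAddCommGroup E]
    [NormedSpace ℝ E] (f : ℂ → E) (hf : Integrable f volume) :
    IntegrableOn (fun p : ℝ × ℝ => p.1 • f (Complex.polarCoord.symm p)) polarCoord.target := by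
  have hf' : Integrable (fun p : ℝ × ℝ => f (Complex.measurableEquivRealProd.symm p)) volume := by
    rw [← (Complex.volume_preserving_equiv_real_prod.symm).integrable_comp_emb
      Complex.measurableEquivRealProd.symm.measurableEmbedding] at hf
    exact hf
  have key : ∀ p : ℝ × ℝ, Complex.measurableEquivRealProd.symm (polarCoord.symm p)
      = Complex.polarCoord.symm p := by
    intro p
    simp [Complex.measurableEquivRealProd_symm_apply, polarCoord_symm_apply, Complex.cos_ofReal_re, Complex.sin_ofReal_re,
      Complex.polarCoord_symm_apply, Complex.ext_iff]
  have h := _root_.integrableOn_comp_polarCoord_symm'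
    (fun p : ℝ × ℝ => f (Complex.measurableEquivRealProd.symm p)) hf'
  simpa only [key] using h

theorem circle_mean_value (g : ℂ → ℂ) (hg : Differentiable ℂ g) {r : ℝ} (hr : 0 < r) :
    ∫ θ in Ioo (-π) π, g (Complex.polarCoord.symm (r, θ)) = ((2 * π : ℝ) : ℂ) * g 0 := by
  have hmap : ∀ θ : ℝ, Complex.polarCoord.symm (r, θ) = circleMap 0 r θ := by
    intro θ
    simp [Complex.polarCoord_symm_apply, circleMap, Complex.exp_mul_I, Complex.ofReal_cos,
      Complex.ofReal_sin]
  simp_rw [hmap]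
  have hper : Function.Periodic (fun θ : ℝ => g (circleMap 0 r θ)) (2 * π) :=
    (periodic_circleMap 0 r).comp g
  have hcauchy : (∮ z in C(0, r), (z - 0)⁻¹ • g z) = (2 * π * Complex.I) • g 0 :=
    (hg.differentiableOn : DifferentiableOn ℂ g (Metric.closedBall 0 r)).circleIntegral_sub_inv_smul
      (Metric.mem_ball_self hr)
  rw [circleIntegral] at hcauchy
  have hint : ∀ θ : ℝ, deriv (circleMap 0 r) θ • (circleMap 0 r θ - 0)⁻¹ • g (circleMap 0 r θ)
      = Complex.I * g (circleMap 0 r θ) := by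
    intro θ
    have hne : circleMap 0 r θ ≠ 0 := circleMap_ne_center hr.ne'
    rw [deriv_circleMap, sub_zero, smul_eq_mul, smul_eq_mul]
    field_simp
  simp_rw [hint, intervalIntegral.integral_const_mul] at hcauchy
  have h2 : ∫ θ in (0:ℝ)..2 * π, g (circleMap 0 r θ) = ((2 * π : ℝ) : ℂ) * g 0 := by
    have := hcauchy
    have hI : (2 * ↑π * Complex.I) • g 0 = Complex.I * (((2 * π : ℝ) : ℂ) * g 0) := by
      simp [smul_eq_mul]; ring
    rw [hI] at this
    exact mul_left_cancel₀ Complex.I_ne_zero this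
  have h3 : ∫ θ in (-π)..π, g (circleMap 0 r θ) = ∫ θ in (0:ℝ)..2 * π, g (circleMap 0 r θ) := by
    have := hper.intervalIntegral_add_eq (-π) 0
    simpa [two_mul] using this
  rw [← MeasureTheory.integral_Ioc_eq_integral_Ioo,
    ← intervalIntegral.integral_of_le (by linarith [Real.pi_pos] : -π ≤ π), h3, h2]

theorem integral_two_mul_exp_neg_sq : ∫ r in Ioi (0:ℝ), 2 * r * Real.exp (-r ^ 2) = 1 := by
  have h := integral_Ioi_of_hasDerivAt_of_nonneg (a := (0:ℝ)) (l := 0)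
      (g := fun r : ℝ => -Real.exp (-r ^ 2)) (g' := fun r => 2 * r * Real.exp (-r ^ 2))
      ((Continuous.neg (by fun_prop)).continuousWithinAt) ?_ ?_ ?_
  · simpa using h
  · intro x _
    have h1 : HasDerivAt (fun r : ℝ => -r ^ 2) (-(2 * x)) x := by
      exact (hasDerivAt_pow 2 x).neg.congr_deriv (by norm_num)
    have h2 := (h1.exp).neg
    exact h2.congr_deriv (by ring)
  · intro x hx
    have : (0:ℝ) < x := hx
    positivity
  · have h4 : Filter.Tendsto (fun r : ℝ => r ^ 2) Filter.atTop Filter.atTop :=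
      Filter.tendsto_pow_atTop two_ne_zero
    have h5 : Filter.Tendsto (fun r : ℝ => Real.exp (-r ^ 2)) Filter.atTop (nhds 0) := by
      simp_rw [Real.exp_neg]
      exact (Real.tendsto_exp_atTop.comp h4).inv_tendsto_atTop
    simpa using h5.neg

theorem gauss1 (g : ℂ → ℂ) (hg : Differentiable ℂ g)
    (hi : Integrable (fun z : ℂ => (π⁻¹ * Real.exp (-Complex.normSq z)) • g z) volume) :
    ∫ z : ℂ, (π⁻¹ * Real.exp (-Complex.normSq z)) • g z = g 0 := by
  set G : ℂ → ℂ := fun z => (π⁻¹ * Real.exp (-Complex.normSq z)) • g z with hG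
  rw [← Complex.integral_comp_polarCoord_symm G]
  have hIO := Complex.integrableOn_comp_polarCoord_symm' G hi
  rw [polarCoord_target] at hIO ⊢
  rw [MeasureTheory.Measure.volume_eq_prod] at hIO ⊢
  rw [setIntegral_prod _ hIO]
  have hstep : ∫ r in Ioi (0:ℝ), ∫ θ in Ioo (-π) π, (r : ℝ) • G (Complex.polarCoord.symm (r, θ))
      = ∫ r in Ioi (0:ℝ), (2 * r * Real.exp (-r ^ 2)) • g 0 := by
    refine setIntegral_congr_fun measurableSet_Ioi (fun r hr => ?_)
    have hr : (0:ℝ) < r := hr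
    have hns : ∀ θ : ℝ, Complex.normSq (Complex.polarCoord.symm (r, θ)) = r ^ 2 := by
      intro θ
      rw [← Complex.sq_norm, Complex.norm_polarCoord_symm, sq_abs]
    have : ∀ θ : ℝ, (r : ℝ) • G (Complex.polarCoord.symm (r, θ))
        = (r * (π⁻¹ * Real.exp (-r ^ 2))) • g (Complex.polarCoord.symm (r, θ)) := by
      intro θ
      rw [hG]
      simp only [hns θ, smul_smul]
    simp_rw [this]
    rw [integral_smul, circle_mean_value g hg hr]
    rw [Complex.real_smul, Complex.real_smul, ← mul_assoc]
    norm_cast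
    have hπ : Real.pi ≠ 0 := Real.pi_ne_zero
    have hπc : (Real.pi : ℂ) ≠ 0 := by exact_mod_cast hπ
    congr 1
    field_simp
  rw [hstep, integral_smul_const, integral_two_mul_exp_neg_sq, one_smul]

noncomputable def dens (m : ℕ) (z : Fin m → ℂ) : ℝ :=
  (Real.pi ^ m)⁻¹ * Real.exp (-∑ j, Complex.normSq (z j))

lemma dens_pos (m : ℕ) (z : Fin m → ℂ) : 0 < dens m z := by
  have := Real.pi_pos
  unfold dens
  positivity

noncomputable def gaussianC' (m : ℕ) : Measure (Fin m → ℂ) :=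
  volume.withDensity fun z =>
    ENNReal.ofReal ((Real.pi ^ m)⁻¹ * Real.exp (-∑ j, Complex.normSq (z j)))

lemma dens_meas (m : ℕ) : Measurable fun z : Fin m → ℂ => (dens m z).toNNReal := by
  apply Measurable.real_toNNReal
  unfold dens
  exact (continuous_const.mul (Real.continuous_exp.comp (continuous_finset_sum _
    (fun j _ => Complex.continuous_normSq.comp (continuous_apply j))).neg)).measurable

lemma gaussianC'_eq (m : ℕ) :
    gaussianC' m = volume.withDensity fun z => ((dens m z).toNNReal : ENNReal) := rfl

lemma gaussian_integrable_iff (m : ℕ) (f : (Fin m → ℂ) → ℂ) :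
    Integrable f (gaussianC' m) ↔ Integrable (fun z => dens m z • f z) volume := by
  rw [gaussianC'_eq, integrable_withDensity_iff_integrable_smul (dens_meas m)]
  constructor <;> intro h <;> refine h.congr (Filter.Eventually.of_forall fun z => ?_) <;>
    simp [NNReal.smul_def, Real.coe_toNNReal _ (dens_pos m z).le]

lemma gaussian_integral_eq (m : ℕ) (f : (Fin m → ℂ) → ℂ) :
    ∫ z, f z ∂(gaussianC' m) = ∫ z, dens m z • f z ∂volume := by
  rw [gaussianC'_eq, integral_withDensity_eq_integral_smul (dens_meas m)]
  congr 1
  funext z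
  simp [NNReal.smul_def, Real.coe_toNNReal _ (dens_pos m z).le]

theorem master (m : ℕ) : ∀ f : (Fin m → ℂ) → ℂ, Differentiable ℂ f →
    Integrable (fun z => dens m z • f z) volume →
    ∫ z, dens m z • f z ∂volume = f 0 := by
  induction m with
  | zero =>
    intro f hf hint
    have h0 : ∀ z : Fin 0 → ℂ, dens 0 z = 1 := by intro z; simp [dens]
    simp only [h0, one_smul]
    rw [MeasureTheory.integral_unique]
    have huniv : (volume : Measure (Fin 0 → ℂ)) univ = 1 := by
      simp [volume_pi, Measure.pi_univ]
    rw [Measure.real, huniv]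
    simp only [ENNReal.toReal_one, one_smul]
    exact congrArg f (Subsingleton.elim _ _)
  | succ m ih =>
    intro f hf hint
    have hcons_diff : ∀ w : Fin m → ℂ, Differentiable ℂ (fun a : ℂ => f (Fin.cons a w)) := by
      intro w
      apply hf.comp
      rw [differentiable_pi]
      intro i
      refine Fin.cases ?_ (fun j => ?_) i
      · simpa using differentiable_id
      · simpa using differentiable_const (w j)
    set e := MeasurableEquiv.piFinSuccAbove (fun _ : Fin (m + 1) => ℂ) 0 with he
    have mp := (MeasureTheory.volume_preserving_piFinSuccAbove (fun _ : Fin (m + 1) => ℂ) 0).symm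
    have hcomp : ∀ p : ℂ × (Fin m → ℂ), e.symm p = Fin.cons p.1 p.2 := by
      intro p
      simp [he, MeasurableEquiv.piFinSuccAbove_symm_apply, Fin.insertNthEquiv, Fin.insertNth_zero]
    have hdens_cons : ∀ (a : ℂ) (w : Fin m → ℂ),
        dens (m + 1) (Fin.cons a w) = (π⁻¹ * Real.exp (-Complex.normSq a)) * dens m w := by
      intro a w
      unfold dens
      rw [Fin.sum_univ_succ]
      simp only [Fin.cons_zero, Fin.cons_succ]
      rw [neg_add, Real.exp_add, pow_succ, mul_inv]
      ring
    set H : ℂ × (Fin m → ℂ) → ℂ :=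
      fun p => (π⁻¹ * Real.exp (-Complex.normSq p.1)) • (dens m p.2 • f (Fin.cons p.1 p.2))
      with hHdef
    have hHeq : ∀ p : ℂ × (Fin m → ℂ), dens (m + 1) (e.symm p) • f (e.symm p) = H p := by
      intro p
      rw [hcomp p, hdens_cons]
      simp only [hHdef, smul_smul]
    have hH : Integrable H (volume.prod volume) := by
      have h2 := (mp.integrable_comp_emb (MeasurableEquiv.measurableEmbedding _)).mpr hint
      rw [← MeasureTheory.Measure.volume_eq_prod]
      exact h2.congr (Filter.Eventually.of_forall fun p => hHeq p)
    have hInt1 : ∫ z, dens (m + 1) z • f z ∂volume = ∫ p, H p ∂(volume.prod volume) := by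
      calc ∫ z, dens (m + 1) z • f z ∂volume
          = ∫ p, dens (m + 1) (e.symm p) • f (e.symm p) ∂volume :=
            (mp.integral_comp (MeasurableEquiv.measurableEmbedding _) _).symm
        _ = ∫ p, H p ∂(volume : Measure (ℂ × (Fin m → ℂ))) :=
            integral_congr_ae (Filter.Eventually.of_forall fun p => hHeq p)
        _ = ∫ p, H p ∂(volume.prod volume) := by
            rw [← MeasureTheory.Measure.volume_eq_prod]
    rw [hInt1, integral_prod_symm _ hH]
    have hinner : ∀ᵐ w : Fin m → ℂ ∂volume,
        (∫ a, H (a, w) ∂volume) = dens m w • f (Fin.cons 0 w) := by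
      filter_upwards [hH.prod_left_ae] with w hw
      have hsw : (fun a : ℂ => H (a, w))
          = fun a => dens m w • ((π⁻¹ * Real.exp (-Complex.normSq a)) • f (Fin.cons a w)) := by
        funext a
        rw [hHdef]
        exact smul_comm _ _ _
      rw [hsw] at hw ⊢
      rw [integral_smul]
      have hw2 : Integrable
          (fun a : ℂ => (π⁻¹ * Real.exp (-Complex.normSq a)) • f (Fin.cons a w)) volume :=
        (integrable_smul_iff (dens_pos m w).ne' _).mp hw
      rw [gauss1 _ (hcons_diff w) hw2]
    rw [integral_congr_ae hinner]
    have hint2 : Integrable (fun w => dens m w • f (Fin.cons (0 : ℂ) w)) volume :=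
      (hH.integral_prod_right).congr hinner
    have hdiff2 : Differentiable ℂ (fun w : Fin m → ℂ => f (Fin.cons (0 : ℂ) w)) := by
      apply hf.comp
      rw [differentiable_pi]
      intro i
      refine Fin.cases ?_ (fun j => ?_) i
      · simpa using differentiable_const (0 : ℂ)
      · simp only [Fin.cons_succ]
        exact (ContinuousLinearMap.proj j : (Fin m → ℂ) →L[ℂ] ℂ).differentiable
    rw [ih _ hdiff2 hint2]
    congr 1
    funext i
    refine Fin.cases rfl (fun j => rfl) i

/-- The standard Gaussian probability measure on `ℂ^m` with density
`π^{-m} exp(-|z|²)` with respect to Lebesgue measure. -/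
noncomputable def gaussianC (m : ℕ) : Measure (Fin m → ℂ) :=
  volume.withDensity fun z =>
    ENNReal.ofReal ((Real.pi ^ m)⁻¹ * Real.exp (-∑ j, Complex.normSq (z j)))

/-- If `f : ℂ^m → ℂ` is entire and Gaussian-integrable, then `∫ f dγ = f 0`. -/
theorem integral_gaussian_of_holomorphic (m : ℕ) (f : (Fin m → ℂ) → ℂ)
    (hf : Differentiable ℂ f) (hint : Integrable f (gaussianC m)) :
    ∫ z, f z ∂(gaussianC m) = f 0 := by
  have h : gaussianC m = gaussianC' m := rfl
  rw [h, gaussian_integral_eq]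
  exact master m f hf ((gaussian_integrable_iff m f).mp (h ▸ hint))
end

section
/- Call a function f : ℂ^{p×m} → ℂ ε-holomorphic if the function z ↦ f(c_ε(z)) is holomorphic on ℂ^{p×m}, where c_ε replaces each entry in every row i with ε_i = -1 by its complex conjugate and leaves rows with ε_i = 1 unchanged. Then for every (n⁰,z⁰) in the Heisenberg group N, the operator T^ε(n⁰,z⁰) of the Gaussian realization maps ε-holomorphic functions to ε-holomorphic functions. -/
/-- The conjugation map `c_ε` which replaces each entry in every row `i` with
`ε_i = -1` by its complex conjugate and leaves rows with `ε_i = 1` unchanged. -/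
noncomputable def cEps {p m : ℕ} (ε : Fin p → ℂ) (z : Fin p → Fin m → ℂ) : Fin p → Fin m → ℂ :=
  fun i j => if ε i = 1 then z i j else (starRingEnd ℂ) (z i j)

/-- A function `f` is `ε`-holomorphic if `z ↦ f (c_ε z)` is holomorphic. The operators
`T^ε(n⁰,z⁰)` of the Gaussian realization map `ε`-holomorphic functions to
`ε`-holomorphic functions. -/
theorem TepsG_preserves_eps_holomorphic (p q : ℕ) (hp : 1 ≤ p) (hpq : p ≤ q)
    (ε : Fin p → ℂ) (hε : ∀ i, ε i = 1 ∨ ε i = -1)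
    (n0 : Fin p → Fin p → ℂ) (hn0 : ∀ i j, (starRingEnd ℂ) (n0 j i) = -n0 i j)
    (z0 : Fin p → Fin (q - p) → ℂ)
    (f : (Fin p → Fin (q - p) → ℂ) → ℂ)
    (hf : Differentiable ℂ fun z => f (cEps ε z)) :
    Differentiable ℂ fun z => TepsG ε n0 z0 f (cEps ε z) := by
  have hproj : ∀ (i : Fin p) (j : Fin (q-p)),
      Differentiable ℂ (fun z : Fin p → Fin (q-p) → ℂ => z i j) := by
    intro i j
    exact (differentiable_apply (𝕜 := ℂ) (F' := fun _ : Fin (q-p) => ℂ) j).comp (differentiable_apply (𝕜 := ℂ) (F' := fun _ : Fin p => Fin (q-p) → ℂ) i)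
  have hinv : ∀ z : Fin p → Fin (q-p) → ℂ,
      cEps ε z + z0 = cEps ε (z + cEps ε z0) := by
    intro z; funext i j
    simp only [cEps, Pi.add_apply]
    by_cases h : ε i = 1 <;> simp [h]
  have h1 : Differentiable ℂ fun z => f (cEps ε z + z0) := by
    have heq : (fun z => f (cEps ε z + z0))
        = (fun z => f (cEps ε z)) ∘ (fun z => z + cEps ε z0) := by
      funext z; simp [Function.comp, hinv z]
    rw [heq]
    exact hf.comp (differentiable_id.add_const _)
  have h2 : Differentiable ℂ fun z : Fin p → Fin (q-p) → ℂ =>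
      ∑ i, if ε i = 1 then ∑ j, (cEps ε z) i j * (starRingEnd ℂ) (z0 i j)
           else ∑ j, z0 i j * (starRingEnd ℂ) ((cEps ε z) i j) := by
    apply Differentiable.fun_sum; intro i _
    by_cases h : ε i = 1
    · simp only [h, if_true, cEps]
      apply Differentiable.fun_sum; intro j _
      exact (hproj i j).mul_const _
    · simp only [h, if_false, cEps, Complex.conj_conj]
      apply Differentiable.fun_sum; intro j _
      exact (hproj i j).const_mul _
  unfold TepsG
  exact ((differentiable_const _ |>.sub h2).cexp).mul (by simpa [hinv] using h1)
end

section
/- Let G be a group with subgroups P and K such that every g ∈ G factors uniquely as g = p·k (p ∈ P, k ∈ K). Let V be a complex vector space, T : P → GL(V) a group homomorphism, and β : P → V a 1-cocycle, i.e., β(p₁p₂) = T(p₁)(β(p₂)) + β(p₁) for all p₁, p₂ ∈ P, such that the family of vectors (β(p))_{p ∈ P, p ≠ 1} is linearly independent. Let L be the linear span of {β(p) : p ∈ P}. Then L is invariant under T(p) for every p ∈ P, and there exist a group homomorphism T̃ : G → GL(L) and a map β̃ : G → L such that T̃(p) agrees with T(p) on L for all p ∈ P, β̃(p·k) = β(p)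 for all p ∈ P and k ∈ K, and β̃(g₁g₂) = T̃(g₁)(β̃(g₂)) + β̃(g₁) for all g₁, g₂ ∈ G. -/
namespace CocycleExtAux

variable {G : Type*} [Group G] {P K : Subgroup G}

section Fact
variable (hfact : ∀ g : G, ∃! pk : P × K, g = (pk.1 : G) * (pk.2 : G))

noncomputable def Pa (g : G) : P := (hfact g).choose.1
noncomputable def Ka (g : G) : K := (hfact g).choose.2

lemma Pa_spec (g : G) : g = (Pa hfact g : G) * (Ka hfact g : G) :=
  (hfact g).choose_spec.1

lemma Pa_eq {g : G} (p : P) (k : K) (h : g = (p : G) * (k : G)) :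
    Pa hfact g = p := by
  have h2 := (hfact g).choose_spec.2 (p, k) h
  rw [Pa, ← h2]

lemma Pa_coe (p : P) : Pa hfact (p : G) = p :=
  Pa_eq hfact p 1 (by simp)

lemma Pa_mul_k (g : G) (k : K) : Pa hfact (g * k) = Pa hfact g :=
  Pa_eq hfact (Pa hfact g) (Ka hfact g * k)
    (by rw [Subgroup.coe_mul, ← mul_assoc, ← Pa_spec hfact g])

lemma Pa_p_mul (p : P) (g : G) : Pa hfact ((p : G) * g) = p * Pa hfact g :=
  Pa_eq hfact (p * Pa hfact g) (Ka hfact g)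
    (by rw [Subgroup.coe_mul, mul_assoc, ← Pa_spec hfact g])

/-- action of `G` on `P` -/
noncomputable def sig (g : G) (q : P) : P := Pa hfact (g * q)

lemma sig_sig (g₁ g₂ : G) (q : P) :
    sig hfact g₁ (sig hfact g₂ q) = sig hfact (g₁ * g₂) q := by
  unfold sig
  have h0 := Pa_spec hfact (g₂ * (q : G))
  have h1 : (g₁ : G) * (Pa hfact (g₂ * q) : G)
      = (g₁ * (g₂ * q)) * ((Ka hfact (g₂ * q) : G))⁻¹ := by
    rw [mul_assoc]
    congr 1
    rw [eq_mul_inv_iff_mul_eq]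
    exact h0.symm
  rw [h1, ← mul_assoc g₁ g₂]
  exact Pa_mul_k hfact (g₁ * g₂ * (q : G)) (Ka hfact (g₂ * q))⁻¹

lemma sig_one (g : G) : sig hfact g 1 = Pa hfact g := by
  simp [sig]

lemma Pa_one : Pa hfact (1 : G) = 1 := Pa_eq hfact 1 1 (by simp)

end Fact


section LinAlg

variable {V : Type*} [AddCommGroup V] [Module ℂ V]
variable {T : P →* (V ≃ₗ[ℂ] V)} {β : P → V}

lemma beta_one (hco : ∀ p₁ p₂ : P, β (p₁ * p₂) = T p₁ (β p₂) + β p₁) :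
    β 1 = 0 := by
  have h := hco 1 1
  simp only [mul_one, map_one, LinearEquiv.coe_one, id_eq] at h
  exact (right_eq_add.mp h)

lemma memL (β : P → V) (p : P) : β p ∈ Submodule.span ℂ (Set.range β) :=
  Submodule.subset_span ⟨p, rfl⟩

noncomputable def bfam (β : P → V) : {p : P // p ≠ 1} → Submodule.span ℂ (Set.range β) :=
  fun q => ⟨β q.1, memL β q.1⟩

lemma bfam_li (hli : LinearIndependent ℂ fun p : {p : P // p ≠ 1} => β p.1) :
    LinearIndependent ℂ (bfam β) :=
  LinearIndependent.of_comp (Submodule.span ℂ (Set.range β)).subtype hli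

lemma bfam_span (hco : ∀ p₁ p₂ : P, β (p₁ * p₂) = T p₁ (β p₂) + β p₁) :
    ⊤ ≤ Submodule.span ℂ (Set.range (bfam β)) := by
  intro x _
  have hx : (x : V) ∈ Submodule.map (Submodule.span ℂ (Set.range β)).subtype
      (Submodule.span ℂ (Set.range (bfam β))) := by
    have hle : Submodule.span ℂ (Set.range β) ≤
        Submodule.map (Submodule.span ℂ (Set.range β)).subtype
          (Submodule.span ℂ (Set.range (bfam β))) := by
      apply Submodule.span_le.mpr
      rintro v ⟨p, rfl⟩
      by_cases hp : p = 1
      · subst hp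
        rw [beta_one hco]
        exact Submodule.zero_mem _
      · exact ⟨bfam β ⟨p, hp⟩, Submodule.subset_span ⟨⟨p, hp⟩, rfl⟩, rfl⟩
    exact hle x.2
  obtain ⟨y, hy, hyx⟩ := hx
  have : y = x := Subtype.ext hyx
  rwa [← this]

noncomputable def Bas (hco : ∀ p₁ p₂ : P, β (p₁ * p₂) = T p₁ (β p₂) + β p₁)
    (hli : LinearIndependent ℂ fun p : {p : P // p ≠ 1} => β p.1) :
    Module.Basis {p : P // p ≠ 1} ℂ (Submodule.span ℂ (Set.range β)) :=
  Module.Basis.mk (bfam_li hli) (bfam_span hco)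

noncomputable def cfam (hfact : ∀ g : G, ∃! pk : P × K, g = (pk.1 : G) * (pk.2 : G))
    (β : P → V) (g : G) : {p : P // p ≠ 1} → Submodule.span ℂ (Set.range β) :=
  fun q => ⟨β (sig hfact g q.1) - β (Pa hfact g),
    sub_mem (memL β _) (memL β _)⟩

variable (hfact : ∀ g : G, ∃! pk : P × K, g = (pk.1 : G) * (pk.2 : G))
  (hco : ∀ p₁ p₂ : P, β (p₁ * p₂) = T p₁ (β p₂) + β p₁)
  (hli : LinearIndependent ℂ fun p : {p : P // p ≠ 1} => β p.1)

noncomputable def fmap (g : G) :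
    Submodule.span ℂ (Set.range β) →ₗ[ℂ] Submodule.span ℂ (Set.range β) :=
  (Bas hco hli).constr ℂ (cfam hfact β g)

lemma fmap_key (g : G) (q : P) (h : β q ∈ Submodule.span ℂ (Set.range β)) :
    ((fmap hfact hco hli g ⟨β q, h⟩ : Submodule.span ℂ (Set.range β)) : V)
      = β (sig hfact g q) - β (Pa hfact g) := by
  by_cases hq : q = 1
  · subst hq
    have h0 : (⟨β 1, h⟩ : Submodule.span ℂ (Set.range β)) = 0 := by
      ext; simpa using beta_one hco
    rw [h0, map_zero, sig_one hfact g]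
    simp
  · have hB : (⟨β q, h⟩ : Submodule.span ℂ (Set.range β)) = Bas hco hli ⟨q, hq⟩ := by
      rw [Bas, Module.Basis.mk_apply]
      rfl
    rw [hB, fmap, Module.Basis.constr_basis]
    rfl

lemma fmap_mul (g₁ g₂ : G) :
    fmap hfact hco hli (g₁ * g₂)
      = (fmap hfact hco hli g₁).comp (fmap hfact hco hli g₂) := by
  apply (Bas hco hli).ext
  intro q
  have hBq : Bas hco hli q = ⟨β q.1, memL β q.1⟩ := by
    rw [Bas, Module.Basis.mk_apply]; rfl
  rw [hBq]
  apply Subtype.ext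
  rw [LinearMap.comp_apply]
  have h2 : fmap hfact hco hli g₂ ⟨β q.1, memL β q.1⟩
      = (⟨β (sig hfact g₂ q.1), memL β _⟩ : Submodule.span ℂ (Set.range β))
        - ⟨β (Pa hfact g₂), memL β _⟩ := by
    apply Subtype.ext
    rw [fmap_key hfact hco hli g₂ q.1 (memL β q.1)]
    rfl
  rw [h2, map_sub]
  have k1 := fmap_key hfact hco hli g₁ (sig hfact g₂ q.1) (memL β _)
  have k2 := fmap_key hfact hco hli g₁ (Pa hfact g₂) (memL β _)
  have kL := fmap_key hfact hco hli (g₁ * g₂) q.1 (memL β q.1)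
  rw [kL, Submodule.coe_sub, k1, k2, sig_sig hfact g₁ g₂ q.1]
  have hPa : sig hfact g₁ (Pa hfact g₂) = Pa hfact (g₁ * g₂) := by
    rw [← sig_one hfact g₂, sig_sig hfact g₁ g₂ 1, sig_one hfact (g₁*g₂)]
  rw [hPa]
  abel

lemma fmap_one : fmap hfact hco hli (1 : G) = LinearMap.id := by
  apply (Bas hco hli).ext
  intro q
  have hBq : Bas hco hli q = ⟨β q.1, memL β q.1⟩ := by
    rw [Bas, Module.Basis.mk_apply]; rfl
  rw [hBq]
  apply Subtype.ext
  rw [fmap_key hfact hco hli 1 q.1 (memL β q.1)]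
  have h1 : sig hfact (1 : G) q.1 = q.1 := by
    rw [sig, one_mul]; exact Pa_coe hfact q.1
  rw [h1, Pa_one hfact, beta_one hco]
  simp

lemma Bas_apply (q : {p : P // p ≠ 1}) :
    Bas hco hli q = (⟨β q.1, memL β q.1⟩ : Submodule.span ℂ (Set.range β)) := by
  rw [Bas, Module.Basis.mk_apply]; rfl

noncomputable def Trep : G →*
    (Submodule.span ℂ (Set.range β) ≃ₗ[ℂ] Submodule.span ℂ (Set.range β)) where
  toFun g := LinearEquiv.ofLinear (fmap hfact hco hli g) (fmap hfact hco hli g⁻¹)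
    (by rw [← fmap_mul, mul_inv_cancel, fmap_one])
    (by rw [← fmap_mul, inv_mul_cancel, fmap_one])
  map_one' := LinearEquiv.ext fun x => by
    rw [LinearEquiv.ofLinear_apply, fmap_one]; rfl
  map_mul' g₁ g₂ := LinearEquiv.ext fun x => by
    rw [LinearEquiv.ofLinear_apply, fmap_mul]; rfl

lemma fmap_agree (p : P) (v : Submodule.span ℂ (Set.range β)) :
    ((fmap hfact hco hli (p : G) v : Submodule.span ℂ (Set.range β)) : V)
      = T p (v : V) := by
  have hEq : (Submodule.span ℂ (Set.range β)).subtype.comp (fmap hfact hco hli (p : G))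
      = ((T p : V ≃ₗ[ℂ] V) : V →ₗ[ℂ] V).comp
          (Submodule.span ℂ (Set.range β)).subtype := by
    apply (Bas hco hli).ext
    intro q
    rw [Bas_apply hco hli q]
    simp only [LinearMap.comp_apply, Submodule.coe_subtype, LinearEquiv.coe_coe]
    rw [fmap_key hfact hco hli (p : G) q.1 (memL β q.1)]
    have h1 : sig hfact (p : G) q.1 = p * q.1 := by
      rw [sig, ← Subgroup.coe_mul]; exact Pa_coe hfact (p * q.1)
    rw [h1, Pa_coe hfact p, hco p q.1]
    abel
  exact LinearMap.congr_fun hEq v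

lemma Trep_apply (g : G) (v : Submodule.span ℂ (Set.range β)) :
    Trep hfact hco hli g v = fmap hfact hco hli g v := rfl

lemma Pa_mul' (g₁ g₂ : G) : sig hfact g₁ (Pa hfact g₂) = Pa hfact (g₁ * g₂) := by
  rw [← sig_one hfact g₂, sig_sig hfact g₁ g₂ 1, sig_one hfact (g₁ * g₂)]

end LinAlg

end CocycleExtAux

open CocycleExtAux in
/-- Let `G = P·K` with unique factorization, `T` a representation of `P` on a complex
vector space `V`, and `β` a 1-cocycle of `T` whose values at `p ≠ 1` are linearly
independent. Then the span `L` of the values of `β` is `T`-invariant, and both the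
representation (restricted to `L`) and the cocycle extend to the whole group `G`. -/
theorem cocycle_representation_extension {G : Type*} [Group G] (P K : Subgroup G)
    (hfact : ∀ g : G, ∃! pk : P × K, g = (pk.1 : G) * (pk.2 : G))
    (V : Type*) [AddCommGroup V] [Module ℂ V]
    (T : P →* (V ≃ₗ[ℂ] V)) (β : P → V)
    (hco : ∀ p₁ p₂ : P, β (p₁ * p₂) = T p₁ (β p₂) + β p₁)
    (hli : LinearIndependent ℂ fun p : {p : P // p ≠ 1} => β p.1) :
    (∀ p : P, ∀ v ∈ Submodule.span ℂ (Set.range β),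
      T p v ∈ Submodule.span ℂ (Set.range β)) ∧
    ∃ (T' : G →* (↥(Submodule.span ℂ (Set.range β)) ≃ₗ[ℂ]
                  ↥(Submodule.span ℂ (Set.range β))))
      (β' : G → ↥(Submodule.span ℂ (Set.range β))),
      (∀ (p : P) (v : ↥(Submodule.span ℂ (Set.range β))),
        ((T' p) v : V) = T p (v : V)) ∧
      (∀ (p : P) (k : K), ((β' ((p : G) * (k : G))) : V) = β p) ∧
      (∀ g₁ g₂ : G, β' (g₁ * g₂) = (T' g₁) (β' g₂) + β' g₁) := by
  constructor
  · intro p v hv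
    have h := fmap_agree hfact hco hli p ⟨v, hv⟩
    rw [← h]
    exact (fmap hfact hco hli (p : G) ⟨v, hv⟩).2
  · refine ⟨Trep hfact hco hli, fun g => ⟨β (Pa hfact g), memL β _⟩, ?_, ?_, ?_⟩
    · intro p v
      rw [Trep_apply hfact hco hli (p : G) v]
      exact fmap_agree hfact hco hli p v
    · intro p k
      simp only
      rw [Pa_eq hfact p k rfl]
    · intro g₁ g₂
      apply Subtype.ext
      rw [Submodule.coe_add, Trep_apply hfact hco hli g₁]
      rw [fmap_key hfact hco hli g₁ (Pa hfact g₂) (memL β _)]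
      simp only
      rw [Pa_mul' hfact g₁ g₂]
      abel
end
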